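/- For n ≥ 5 with n ≡ 0 (mod 4), the cycle C_n is not a 2-threshold graph. -/

import Mathlib

open Fin.NatCast Fin.CommRing in
/-- For n ≥ 5 with n ≡ 0 (mod 4), Cₙ is not a 2-threshold graph. -/
theorem cn_zero_mod_four_not_two_threshold (n : ℕ) (hn : 5 ≤ n) (hmod : n % 4 = 0) :
    ¬ ∃ (θ₁ θ₂ : ℝ), θ₁ < θ₂ ∧ ∃ r : Fin n → ℝ, ∀ u v : Fin n, u ≠ v →
      ((SimpleGraph.cycleGraph n).Adj u v ↔ θ₁ ≤ r u + r v ∧ r u + r v < θ₂) := by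
  rintro ⟨θ₁, θ₂, hθ, r, h⟩
  have h8 : 8 ≤ n := by omega
  haveI : NeZero n := ⟨by omega⟩
  -- values of small numerals in Fin n
  have hval : ∀ k : ℕ, k < n → ((k : ℕ) : Fin n).val = k := by
    intro k hk
    rw [Fin.val_natCast]
    exact Nat.mod_eq_of_lt hk
  have hv1 : ((1 : Fin n)).val = 1 := by
    have e : ((1:ℕ) : Fin n) = (1 : Fin n) := by push_cast; ring
    rw [← e]; exact hval 1 (by omega)
  have hv3 : ((3 : Fin n)).val = 3 := by
    have e : ((3:ℕ) : Fin n) = (3 : Fin n) := by push_cast; ring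
    rw [← e]; exact hval 3 (by omega)
  have hv4 : ((4 : Fin n)).val = 4 := by
    have e : ((4:ℕ) : Fin n) = (4 : Fin n) := by push_cast; ring
    rw [← e]; exact hval 4 (by omega)
  -- edges of the cycle
  have edge : ∀ i : Fin n, θ₁ ≤ r i + r (i + 1) ∧ r i + r (i + 1) < θ₂ := by
    intro i
    have hne : i ≠ i + 1 := by
      intro hcon
      have h1 : (1 : Fin n) = 0 := by
        have := congrArg (· - i) hcon
        simpa using this.symm
      rw [Fin.ext_iff, hv1] at h1
      simp at h1
    have hadj : (SimpleGraph.cycleGraph n).Adj i (i + 1) := by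
      rw [SimpleGraph.cycleGraph_adj']
      right
      rw [show i + 1 - i = 1 by ring, hv1]
    exact (h i (i + 1) hne).mp hadj
  -- non-edges at distance 3
  have nonedge : ∀ i : Fin n, r i + r (i + 3) < θ₁ ∨ θ₂ ≤ r i + r (i + 3) := by
    intro i
    by_contra hc
    push_neg at hc
    have hne : i ≠ i + 3 := by
      intro hcon
      have h3 : (3 : Fin n) = 0 := by
        have := congrArg (· - i) hcon
        simpa using this.symm
      rw [Fin.ext_iff, hv3] at h3
      simp at h3
    have hadj := (h i (i + 3) hne).mpr ⟨hc.1, hc.2⟩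
    rw [SimpleGraph.cycleGraph_adj'] at hadj
    rcases hadj with h1 | h1
    · -- (i - (i+3)).val = 1, i.e. (-3).val = 1, so -3 = 1, so 4 = 0
      have heq : i - (i + 3) = 1 := by rw [Fin.ext_iff, hv1]; exact h1
      have h40 : (4 : Fin n) = 0 := by linear_combination -heq
      rw [Fin.ext_iff, hv4] at h40
      simp at h40
    · have : i + 3 - i = 3 := by ring
      rw [this, hv3] at h1
      omega
  -- key dichotomy
  have key : ∀ i : Fin n, (r i < r (i + 2) ∧ r (i + 3) < r (i + 1)) ∨
      (r (i + 2) < r i ∧ r (i + 1) < r (i + 3)) := by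
    intro i
    have e0 := edge i
    have e2 := edge (i + 2)
    rw [show i + 2 + 1 = i + 3 by ring] at e2
    rcases nonedge i with hlt | hge
    · left
      constructor <;> linarith
    · right
      constructor <;> linarith
  -- monotone steps
  have stepA : ∀ i : Fin n, r i < r (i + 2) → r (i + 2) < r (i + 2 + 2) := by
    intro i hlt
    rcases key i with ⟨_, h13⟩ | ⟨hc, _⟩
    · rcases key (i + 1) with ⟨h13', _⟩ | ⟨_, h24⟩
      · rw [show i + 1 + 2 = i + 3 by ring] at h13'
        linarith
      · rw [show i + 1 + 1 = i + 2 by ring, show i + 1 + 3 = i + 2 + 2 by ring] at h24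
        exact h24
    · linarith
  have stepB : ∀ i : Fin n, r (i + 2) < r i → r (i + 2 + 2) < r (i + 2) := by
    intro i hlt
    rcases key i with ⟨hc, _⟩ | ⟨_, h13⟩
    · linarith
    · rcases key (i + 1) with ⟨_, h24⟩ | ⟨h13', _⟩
      · rw [show i + 1 + 3 = i + 2 + 2 by ring, show i + 1 + 1 = i + 2 by ring] at h24
        exact h24
      · rw [show i + 1 + 2 = i + 3 by ring] at h13'
        linarith
  -- the chain around the cycle
  set c : ℕ → Fin n := fun k => ((2 * k : ℕ) : Fin n) with hc
  have hc0 : c 0 = 0 := by simp [hc]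
  have hcs : ∀ k : ℕ, c (k + 1) = c k + 2 := by
    intro k
    simp only [hc]
    push_cast
    ring
  have hcn : c (n / 2) = 0 := by
    have : (2 * (n / 2) : ℕ) = n := by omega
    simp only [hc, this]
    exact Fin.natCast_self n
  have hK : n / 2 - 1 + 1 = n / 2 := by omega
  rcases key 0 with ⟨h02, _⟩ | ⟨h02, _⟩
  · -- increasing chain
    have Q : ∀ k : ℕ, r 0 ≤ r (c k) ∧ r (c k) < r (c k + 2) := by
      intro k
      induction k with
      | zero =>
        rw [hc0]
        exact ⟨le_refl _, by rw [show (0:Fin n) + 2 = 0 + 2 by ring]; exact h02⟩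
      | succ k ih =>
        rw [hcs k]
        exact ⟨by linarith [ih.1, ih.2], stepA (c k) ih.2⟩
    have hQ := Q (n / 2 - 1)
    have : r (c (n / 2 - 1) + 2) = r 0 := by rw [← hcs, hK, hcn]
    rw [this] at hQ
    linarith [hQ.1, hQ.2]
  · -- decreasing chain
    have h02' : r (0 + 2) < r 0 := h02
    have Q : ∀ k : ℕ, r (c k) ≤ r 0 ∧ r (c k + 2) < r (c k) := by
      intro k
      induction k with
      | zero =>
        rw [hc0]
        exact ⟨le_refl _, h02'⟩
      | succ k ih =>
        rw [hcs k]
        exact ⟨by linarith [ih.1, ih.2], stepB (c k) ih.2⟩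
    have hQ := Q (n / 2 - 1)
    have : r (c (n / 2 - 1) + 2) = r 0 := by rw [← hcs, hK, hcn]
    rw [this] at hQ
    linarith [hQ.1, hQ.2]
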